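/- Fix N ≥ 2, α < 0, μ > 0, and define for ω > α²/N² the squared L² mass of the ground state M(ω) = N·((μ+1)^{1/μ}/μ)·ω^{1/μ − 1/2} ∫_{|α|/(N√ω)}^1 (1−t²)^{1/μ−1} dt. Then dM/dω = C[(1/μ − 1/2)∫_{|α|/(N√ω)}^1 (1−t²)^{1/μ−1} dt + (|α|/(2N√ω))(1 − α²/(N²ω))^{1/μ−1}] with C = N((μ+1)^{1/μ}/μ) ω^{1/μ − 3/2}, and this derivative is strictly positive for all ω > α²/N² whenever 0 < μ ≤ 2. -/

import Mathlib

open MeasureTheory intervalIntegral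

set_option maxHeartbeats 1000000

noncomputable section

/-- Squared `L²` mass of the ground state on the star graph with `N` edges:
`M(ω) = N ((μ+1)^{1/μ}/μ) ω^{1/μ-1/2} ∫_{|α|/(N√ω)}^1 (1-t²)^{1/μ-1} dt`. -/
def groundStateMass (N : ℕ) (μ α : ℝ) (ω : ℝ) : ℝ :=
  (N : ℝ) * ((μ + 1) ^ (1 / μ) / μ) * ω ^ (1 / μ - 1 / 2) *
    ∫ t in (|α| / ((N : ℝ) * Real.sqrt ω))..1, (1 - t ^ 2) ^ (1 / μ - 1)

/-- Vakhitov–Kolokolov slope condition: for `ω > α²/N²` the derivative of the squared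
mass of the ground state equals
`C [(1/μ - 1/2) ∫_{|α|/(N√ω)}^1 (1-t²)^{1/μ-1} dt + (|α|/(2N√ω))(1-α²/(N²ω))^{1/μ-1}]`
with `C = N ((μ+1)^{1/μ}/μ) ω^{1/μ-3/2}`, and this derivative is strictly positive
whenever `0 < μ ≤ 2`. -/
theorem ground_state_mass_slope (N : ℕ) (hN : 2 ≤ N) (μ α : ℝ)
    (hμ : 0 < μ) (hα : α < 0) (ω : ℝ) (hω : α ^ 2 / (N : ℝ) ^ 2 < ω) :
    let C : ℝ := (N : ℝ) * ((μ + 1) ^ (1 / μ) / μ) * ω ^ (1 / μ - 3 / 2)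
    let D : ℝ := C * ((1 / μ - 1 / 2) *
        (∫ t in (|α| / ((N : ℝ) * Real.sqrt ω))..1, (1 - t ^ 2) ^ (1 / μ - 1))
      + (|α| / (2 * (N : ℝ) * Real.sqrt ω)) *
          (1 - α ^ 2 / ((N : ℝ) ^ 2 * ω)) ^ (1 / μ - 1))
    HasDerivAt (groundStateMass N μ α) D ω ∧ (μ ≤ 2 → 0 < D) := by
  intro C D
  unfold D C
  clear D C
  have hN0 : (0:ℝ) < N := by
    have : (2:ℝ) ≤ N := by exact_mod_cast hN
    linarith
  have hα0 : 0 < |α| := abs_pos.mpr hα.ne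
  have hω0 : 0 < ω := lt_of_le_of_lt (by positivity) hω
  have hs : 0 < Real.sqrt ω := Real.sqrt_pos.mpr hω0
  set p : ℝ := 1 / μ - 1 with hpdef
  have hp1 : -1 < p := by
    have : 0 < 1/μ := by positivity
    simp only [hpdef]; linarith
  set a : ℝ := |α| / ((N:ℝ) * Real.sqrt ω) with hadef
  have ha0 : 0 < a := by positivity
  have ha2 : a ^ 2 = α ^ 2 / ((N:ℝ)^2 * ω) := by
    rw [hadef, div_pow, mul_pow, Real.sq_sqrt hω0.le, sq_abs]
  have ha2lt : a ^ 2 < 1 := by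
    rw [ha2, div_lt_one (by positivity)]
    have := (div_lt_iff₀ (by positivity : (0:ℝ) < (N:ℝ)^2)).mp hω
    linarith
  have ha1 : a < 1 := by nlinarith
  -- measurability
  have hmeas : Measurable (fun t : ℝ => (1 - t ^ 2) ^ p) :=
    (measurable_const.sub ((measurable_id.pow_const 2))).pow measurable_const
  -- interval integrability
  have h1 : IntervalIntegrable (fun t : ℝ => (1 - t) ^ p) volume a 1 := by
    have := (intervalIntegrable_rpow' hp1 (a := 1 - a) (b := 0)).comp_sub_left 1
    simpa using this
  have hint : IntervalIntegrable (fun t : ℝ => (1 - t ^ 2) ^ p) volume a 1 := by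
    refine IntervalIntegrable.mono_fun' (g := fun t => (2:ℝ) ^ |p| * (1 - t) ^ p)
      (h1.const_mul _) hmeas.aestronglyMeasurable ?_
    rw [Set.uIoc_of_le ha1.le]
    filter_upwards [ae_restrict_mem measurableSet_Ioc] with t ht
    obtain ⟨hta, ht1⟩ := ht
    have ht0 : 0 < t := lt_trans ha0 hta
    have h1t : 0 ≤ 1 - t := by linarith
    have h1t2 : 0 ≤ 1 - t ^ 2 := by nlinarith
    have h2p : (1:ℝ) ≤ 2 ^ |p| := Real.one_le_rpow one_le_two (abs_nonneg p)
    rw [Real.norm_eq_abs, abs_of_nonneg (Real.rpow_nonneg h1t2 p)]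
    rcases le_or_gt 0 p with hp0 | hp0
    · have : (1 - t ^ 2 : ℝ) = (1 - t) * (1 + t) := by ring
      rw [this, Real.mul_rpow h1t (by linarith)]
      have hle : (1 + t : ℝ) ^ p ≤ 2 ^ |p| := by
        rw [abs_of_nonneg hp0]
        exact Real.rpow_le_rpow (by linarith) (by linarith) hp0
      calc (1 - t) ^ p * (1 + t) ^ p ≤ (1 - t) ^ p * 2 ^ |p| :=
            mul_le_mul_of_nonneg_left hle (Real.rpow_nonneg h1t p)
        _ = 2 ^ |p| * (1 - t) ^ p := mul_comm _ _
    · rcases eq_or_lt_of_le ht1 with rfl | ht1'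
      · simp [Real.zero_rpow hp0.ne]
      · have h1t' : 0 < 1 - t := by linarith
        have hle : (1 - t ^ 2 : ℝ) ^ p ≤ (1 - t) ^ p :=
          Real.rpow_le_rpow_of_nonpos h1t' (by nlinarith) hp0.le
        calc (1 - t ^ 2 : ℝ) ^ p ≤ (1 - t) ^ p := hle
          _ ≤ 2 ^ |p| * (1 - t) ^ p := le_mul_of_one_le_left (Real.rpow_nonneg h1t p) h2p
  -- continuity of the integrand at the left endpoint
  have hcont : ContinuousAt (fun t : ℝ => (1 - t ^ 2) ^ p) a := by
    have hbase : (1 - a ^ 2 : ℝ) ≠ 0 := by nlinarith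
    exact ContinuousAt.rpow_const ((continuous_const.sub (continuous_pow 2)).continuousAt) (Or.inl hbase)
  have hsm : StronglyMeasurableAtFilter (fun t : ℝ => (1 - t ^ 2) ^ p) (nhds a) volume :=
    ⟨Set.univ, Filter.univ_mem, hmeas.aestronglyMeasurable.restrict⟩
  have hH : HasDerivAt (fun u => ∫ t in u..1, (1 - t ^ 2) ^ p) (-(1 - a ^ 2) ^ p) a :=
    intervalIntegral.integral_hasDerivAt_left hint hsm hcont
  -- derivative of the moving endpoint
  have hg0 : HasDerivAt (fun x : ℝ => |α| / (N : ℝ) * x ^ (-(1/2) : ℝ))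
      (|α| / (N : ℝ) * (-(1/2) * ω ^ (-(1/2) - 1 : ℝ))) ω :=
    (Real.hasDerivAt_rpow_const (p := (-(1/2) : ℝ)) (Or.inl hω0.ne')).const_mul _
  have hg : HasDerivAt (fun x : ℝ => |α| / ((N : ℝ) * Real.sqrt x))
      (|α| / (N : ℝ) * (-(1/2) * ω ^ (-(1/2) - 1 : ℝ))) ω := by
    refine hg0.congr_of_eventuallyEq ?_
    filter_upwards [eventually_gt_nhds hω0] with x hx
    rw [Real.sqrt_eq_rpow, Real.rpow_neg hx.le]
    ring
  have hF : HasDerivAt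
      (fun x : ℝ => ∫ t in (|α| / ((N : ℝ) * Real.sqrt x))..1, (1 - t ^ 2) ^ p)
      (-(1 - a ^ 2) ^ p * (|α| / (N : ℝ) * (-(1/2) * ω ^ (-(1/2) - 1 : ℝ)))) ω :=
    by
      have key : HasDerivAt (fun u => ∫ t in u..1, (1 - t ^ 2) ^ p) (-(1 - a ^ 2) ^ p)
          (|α| / ((N : ℝ) * Real.sqrt ω)) := hH
      exact key.comp ω hg
  have hP : HasDerivAt (fun x : ℝ => x ^ (1/μ - 1/2 : ℝ))
      ((1/μ - 1/2) * ω ^ (1/μ - 1/2 - 1 : ℝ)) ω :=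
    Real.hasDerivAt_rpow_const (Or.inl hω0.ne')
  set c : ℝ := (N : ℝ) * ((μ + 1) ^ (1 / μ) / μ) with hcdef
  have hfun : groundStateMass N μ α = fun x : ℝ =>
      c * (x ^ (1/μ - 1/2 : ℝ) *
        ∫ t in (|α| / ((N : ℝ) * Real.sqrt x))..1, (1 - t ^ 2) ^ p) := by
    funext x
    simp only [groundStateMass, ← hpdef, hcdef]
    ring
  have hMain : HasDerivAt (groundStateMass N μ α)
      (c * ((1/μ - 1/2) * ω ^ (1/μ - 1/2 - 1 : ℝ) *
          (∫ t in a..1, (1 - t ^ 2) ^ p) +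
        ω ^ (1/μ - 1/2 : ℝ) *
          (-(1 - a ^ 2) ^ p * (|α| / (N : ℝ) * (-(1/2) * ω ^ (-(1/2) - 1 : ℝ)))))) ω := by
    rw [hfun]
    exact (hP.mul hF).const_mul c
  -- identify the derivative value with D
  have hsne : Real.sqrt ω ≠ 0 := hs.ne'
  have e1 : ω ^ (1/μ - 1/2 - 1 : ℝ) = ω ^ (1/μ - 3/2 : ℝ) := by
    rw [show (1/μ - 1/2 - 1 : ℝ) = 1/μ - 3/2 by ring]
  have e2 : ω ^ (1/μ - 1/2 : ℝ) * ω ^ (-(1/2) - 1 : ℝ) =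
      ω ^ (1/μ - 3/2 : ℝ) * (Real.sqrt ω)⁻¹ := by
    have h : (1/μ - 1/2 : ℝ) + (-(1/2) - 1) = (1/μ - 3/2) + (-(1/2)) := by ring
    rw [← Real.rpow_add hω0, h, Real.rpow_add hω0, Real.rpow_neg hω0.le,
      ← Real.sqrt_eq_rpow]
  have hbase' : (1 - α ^ 2 / ((N : ℝ) ^ 2 * ω) : ℝ) = 1 - a ^ 2 := by rw [ha2]
  have hDeq : (N : ℝ) * ((μ + 1) ^ (1 / μ) / μ) * ω ^ (1 / μ - 3 / 2) *
        ((1 / μ - 1 / 2) * (∫ t in a..1, (1 - t ^ 2) ^ p) +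
          |α| / (2 * (N : ℝ) * Real.sqrt ω) * (1 - α ^ 2 / ((N : ℝ) ^ 2 * ω)) ^ p) =
      c * ((1/μ - 1/2) * ω ^ (1/μ - 1/2 - 1 : ℝ) *
          (∫ t in a..1, (1 - t ^ 2) ^ p) +
        ω ^ (1/μ - 1/2 : ℝ) *
          (-(1 - a ^ 2) ^ p * (|α| / (N : ℝ) * (-(1/2) * ω ^ (-(1/2) - 1 : ℝ))))) := by
    rw [hbase', e1, hcdef]
    have e2' : ω ^ (1/μ - 1/2 : ℝ) * (-(1 - a ^ 2) ^ p *
        (|α| / (N : ℝ) * (-(1/2) * ω ^ (-(1/2) - 1 : ℝ)))) =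
        (ω ^ (1/μ - 1/2 : ℝ) * ω ^ (-(1/2) - 1 : ℝ)) *
          ((1 - a ^ 2) ^ p * (|α| / (N : ℝ) * (1/2))) := by ring
    rw [e2', e2]
    field_simp
  clear_value p a
  constructor
  · rw [hDeq]; exact hMain
  · intro hμ2
    have hC : 0 < (N : ℝ) * ((μ + 1) ^ (1 / μ) / μ) * ω ^ (1 / μ - 3 / 2) :=
      mul_pos (mul_pos hN0 (div_pos (Real.rpow_pos_of_pos (by linarith) _) hμ))
        (Real.rpow_pos_of_pos hω0 _)
    have hS1 : 0 ≤ (1 / μ - 1 / 2) * ∫ t in a..1, (1 - t ^ 2) ^ p := by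
      apply mul_nonneg
      · rw [sub_nonneg, div_le_div_iff₀ (by norm_num) hμ]
        linarith
      · apply intervalIntegral.integral_nonneg ha1.le
        intro t ht
        apply Real.rpow_nonneg
        have h0t : 0 ≤ t := le_trans ha0.le ht.1
        have ht2 : t ^ 2 ≤ 1 := pow_le_one₀ h0t ht.2
        linarith
    have hS2 : 0 < |α| / (2 * (N : ℝ) * Real.sqrt ω) *
        (1 - α ^ 2 / ((N : ℝ) ^ 2 * ω)) ^ p := by
      have hden : 0 < 2 * (N : ℝ) * Real.sqrt ω := mul_pos (mul_pos two_pos hN0) hs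
      refine mul_pos (div_pos hα0 hden) (Real.rpow_pos_of_pos ?_ _)
      linarith [ha2lt, ha2]
    exact mul_pos hC (by linarith)

end
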